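/- arXiv:2412.11633 — 2 statements merged into one kernel-verified Lean document; each statement's English description precedes it below -/
import Mathlib

section
/- Let Φ be the non-selective measurement channel associated with a complete family of pairwise orthogonal projections {P_a} on ℂ^n. For every Hermitian n×n matrix σ, every complex n×n matrix ρ, and every function f : ℝ → ℝ applied to the Hermitian matrix Φ(σ) via the functional calculus, one has Tr(ρ · f(Φ(σ))) = Tr(Φ(ρ) · f(Φ(σ))). -/
open Matrix Kronecker
open scoped ComplexOrder

noncomputable section

variable {n : Type*} [Fintype n] [DecidableEq n]

/-- `|X| = (X† X)^{1/2}`, the positive semidefinite absolute value of a matrix. -/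
def matAbs (X : Matrix n n ℂ) : Matrix n n ℂ :=
  ((Matrix.posSemidef_conjTranspose_mul_self X).1.eigenvectorUnitary : Matrix n n ℂ) *
    diagonal (((↑) : ℝ → ℂ) ∘ (√·) ∘ (Matrix.posSemidef_conjTranspose_mul_self X).1.eigenvalues) *
    (star (Matrix.posSemidef_conjTranspose_mul_self X).1.eigenvectorUnitary : Matrix n n ℂ)

/-- `Tr |X|^p`, with the `p`-th power taken through the functional calculus. -/
def traceAbsPow (p : ℝ) (X : Matrix n n ℂ) : ℝ :=
  (Matrix.trace (cfc (fun x : ℝ => x ^ p) (matAbs X))).re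

/-- The Schatten `p`-norm `‖X‖_p = (Tr |X|^p)^(1/p)`. -/
def schatten (p : ℝ) (X : Matrix n n ℂ) : ℝ :=
  (traceAbsPow p X) ^ (1 / p)

/-- Matrix square root via the functional calculus (agrees with the positive semidefinite
square root on positive semidefinite matrices). -/
def msqrt (X : Matrix n n ℂ) : Matrix n n ℂ := cfc Real.sqrt X

/-- Matrix natural logarithm via the functional calculus. -/
def mlog (X : Matrix n n ℂ) : Matrix n n ℂ := cfc Real.log X

/-- Von Neumann entropy `S(ρ) = -Tr(ρ log ρ)`. -/
def vnEntropy (ρ : Matrix n n ℂ) : ℝ := -(Matrix.trace (ρ * mlog ρ)).re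

/-- Relative entropy `S(ρ‖σ) = Tr(ρ log ρ) - Tr(ρ log σ)`. -/
def relEnt (ρ σ : Matrix n n ℂ) : ℝ :=
  (Matrix.trace (ρ * mlog ρ)).re - (Matrix.trace (ρ * mlog σ)).re

/-- Uhlmann fidelity `F(ρ,σ) = (Tr|√σ √ρ|)²`. -/
def fidelity (ρ σ : Matrix n n ℂ) : ℝ :=
  ((Matrix.trace (matAbs (msqrt σ * msqrt ρ))).re) ^ 2

/-- Partial trace over the second factor. -/
def ptraceE {S E : Type*} [Fintype E] (Ω : Matrix (S × E) (S × E) ℂ) : Matrix S S ℂ :=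
  Matrix.of fun s s' => ∑ e, Ω (s, e) (s', e)

/-- Partial trace over the first factor. -/
def ptraceS {S E : Type*} [Fintype S] (Ω : Matrix (S × E) (S × E) ℂ) : Matrix E E ℂ :=
  Matrix.of fun e e' => ∑ s, Ω (s, e) (s, e')

open Polynomial in
lemma commute_aeval' {R A : Type*} [CommSemiring R] [Semiring A] [Algebra R A]
    (a b : A) (h : Commute b a) (p : R[X]) : Commute b (aeval a p) := by
  induction p using Polynomial.induction_on' with
  | add p q hp hq => simpa [map_add] using hp.add_right hq
  | monomial k c =>
      simp only [aeval_monomial]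
      exact (Algebra.commute_algebraMap_right c b).mul_right (h.pow_right k)

open Polynomial in
lemma commute_cfc' {m : Type*} [Fintype m] [DecidableEq m]
    (A B : Matrix m m ℂ) (hA : A.IsHermitian) (h : Commute B A) (f : ℝ → ℝ) :
    Commute B (hA.cfc f) := by
  obtain ⟨p, hp⟩ : ∃ p : ℝ[X], ∀ x ∈ spectrum ℝ A, f x = p.eval x := by
    refine ⟨Lagrange.interpolate (Matrix.finite_real_spectrum (A := A)).toFinset id f,
      fun x hx => ?_⟩
    exact (Lagrange.eval_interpolate_at_node f (Set.injOn_id _)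
      ((Matrix.finite_real_spectrum (A := A)).mem_toFinset.mpr hx)).symm
  have h1 := cfc_polynomial (R := ℝ) p A hA.isSelfAdjoint
  rw [← hA.cfc_eq, cfc_congr hp, h1]
  exact commute_aeval' A B h p

/-- Lemma 1 of the paper: `Tr(ρ f(Φ(σ))) = Tr(Φ(ρ) f(Φ(σ)))`, where `f` is applied to the
Hermitian matrix `Φ(σ)` through the spectral functional calculus. -/
theorem trace_mul_cfc_measurement
    {n ι : Type*} [Fintype n] [DecidableEq n] [Fintype ι]
    (P : ι → Matrix n n ℂ)
    (hproj : ∀ a, P a * P a = P a)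
    (hherm : ∀ a, (P a)ᴴ = P a)
    (horth : ∀ a b, a ≠ b → P a * P b = 0)
    (hsum : ∑ a, P a = 1)
    (σ : Matrix n n ℂ) (hσ : σ.IsHermitian)
    (ρ : Matrix n n ℂ) (f : ℝ → ℝ)
    (hΦσ : (∑ a, P a * σ * P a).IsHermitian) :
    Matrix.trace (ρ * hΦσ.cfc f)
      = Matrix.trace ((∑ a, P a * ρ * P a) * hΦσ.cfc f) := by
  set A := ∑ a, P a * σ * P a with hA
  set B := hΦσ.cfc f with hB
  have hcomm : ∀ a, Commute (P a) A := by
    intro a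
    have hL : P a * A = P a * σ * P a := by
      rw [hA, Finset.mul_sum, Finset.sum_eq_single a]
      · rw [← mul_assoc, ← mul_assoc, hproj a]
      · intro b _ hb
        rw [← mul_assoc, ← mul_assoc, horth a b (Ne.symm hb), zero_mul, zero_mul]
      · simp
    have hR : A * P a = P a * σ * P a := by
      rw [hA, Finset.sum_mul, Finset.sum_eq_single a]
      · rw [mul_assoc, hproj a]
      · intro b _ hb
        rw [mul_assoc, mul_assoc, horth b a hb, mul_zero, mul_zero]
      · simp
    exact hL.trans hR.symm
  have hcommB : ∀ a, Commute (P a) B := fun a =>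
    commute_cfc' A (P a) hΦσ (hcomm a) f
  have key : ∀ a, Matrix.trace (P a * ρ * P a * B) = Matrix.trace (ρ * B * P a) := by
    intro a
    have e1 : P a * ρ * P a * B = P a * ρ * (B * P a) := by
      rw [mul_assoc, ← (hcommB a).eq]
    rw [e1, Matrix.trace_mul_cycle]
    rw [mul_assoc B, hproj a, Matrix.trace_mul_cycle]
  calc Matrix.trace (ρ * B)
      = Matrix.trace (ρ * B * (1 : Matrix n n ℂ)) := by rw [mul_one]
    _ = Matrix.trace (ρ * B * ∑ a, P a) := by rw [hsum]
    _ = ∑ a, Matrix.trace (ρ * B * P a) := by rw [Finset.mul_sum, Matrix.trace_sum]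
    _ = ∑ a, Matrix.trace (P a * ρ * P a * B) :=
        Finset.sum_congr rfl fun a _ => (key a).symm
    _ = Matrix.trace ((∑ a, P a * ρ * P a) * B) := by
        rw [Finset.sum_mul, Matrix.trace_sum]
end
end

section
/- Let Φ be the non-selective measurement channel associated with a complete family of pairwise orthogonal projections {P_a} on ℂ^n. Then for every complex n×n matrix ρ, ‖Φ(ρ)‖₂ ≤ ‖ρ‖₂, with equality if and only if Φ(ρ) = ρ. -/
open Matrix Kronecker
open scoped ComplexOrder

noncomputable section

variable {n : Type*} [Fintype n] [DecidableEq n]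

section Aux

lemma traceAbsPow_two' (X : Matrix n n ℂ) :
    traceAbsPow 2 X = (Matrix.trace (Xᴴ * X)).re := by
  unfold traceAbsPow matAbs
  have hps := Matrix.posSemidef_conjTranspose_mul_self X
  have e : ((Matrix.posSemidef_conjTranspose_mul_self X).1.eigenvectorUnitary : Matrix n n ℂ) *
    diagonal (((↑) : ℝ → ℂ) ∘ (√·) ∘ (Matrix.posSemidef_conjTranspose_mul_self X).1.eigenvalues) *
    (star (Matrix.posSemidef_conjTranspose_mul_self X).1.eigenvectorUnitary : Matrix n n ℂ)
      = cfc Real.sqrt (Xᴴ * X) := by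
    rw [hps.1.cfc_eq]; rfl
  have hA : IsSelfAdjoint (Xᴴ * X) := hps.1
  have hnn : ∀ x ∈ spectrum ℝ (Xᴴ * X), 0 ≤ x := by
    open scoped MatrixOrder in exact fun x hx => spectrum_nonneg_of_nonneg hps.nonneg hx
  rw [e, ← cfc_comp (g := fun x : ℝ => x ^ (2:ℝ)) (f := Real.sqrt) (a := Xᴴ * X)]
  rw [cfc_congr (g := id), cfc_id ℝ (Xᴴ * X)]
  intro x hx
  have : 0 ≤ x := hnn x hx
  simp [Real.sq_sqrt this]

lemma trace_conj_re' (X : Matrix n n ℂ) :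
    (Matrix.trace (Xᴴ * X)).re = ∑ i, ∑ j, Complex.normSq (X j i) := by
  simp only [Matrix.trace, Matrix.diag, Matrix.mul_apply, Matrix.conjTranspose_apply,
    Complex.re_sum]
  congr 1; funext i; congr 1; funext j
  rw [Complex.star_def, ← Complex.normSq_eq_conj_mul_self]
  simp

lemma trace_re_nonneg' (X : Matrix n n ℂ) : 0 ≤ (Matrix.trace (Xᴴ * X)).re := by
  rw [trace_conj_re']
  exact Finset.sum_nonneg fun i _ => Finset.sum_nonneg fun j _ => Complex.normSq_nonneg _

lemma trace_eq_zero_iff' (X : Matrix n n ℂ) :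
    (Matrix.trace (Xᴴ * X)).re = 0 ↔ X = 0 := by
  rw [trace_conj_re']
  constructor
  · intro h
    ext j i
    have h1 : ∀ i ∈ Finset.univ, (0:ℝ) ≤ ∑ j, Complex.normSq (X j i) := by
      intro i _; exact Finset.sum_nonneg fun j _ => Complex.normSq_nonneg _
    have h2 := (Finset.sum_eq_zero_iff_of_nonneg h1).mp h i (Finset.mem_univ i)
    have h3 : ∀ j ∈ Finset.univ, (0:ℝ) ≤ Complex.normSq (X j i) := by
      intro j _; exact Complex.normSq_nonneg _
    have h4 := (Finset.sum_eq_zero_iff_of_nonneg h3).mp h2 j (Finset.mem_univ j)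
    simpa using Complex.normSq_eq_zero.mp h4
  · intro h; simp [h]

end Aux

/-- The Hilbert-Schmidt norm contracts under the non-selective measurement channel `Φ`,
with equality iff the state is invariant. -/
theorem hilbertSchmidt_measurement_le
    {n ι : Type*} [Fintype n] [DecidableEq n] [Fintype ι]
    (P : ι → Matrix n n ℂ)
    (hproj : ∀ a, P a * P a = P a)
    (hherm : ∀ a, (P a)ᴴ = P a)
    (horth : ∀ a b, a ≠ b → P a * P b = 0)
    (hsum : ∑ a, P a = 1) :
    ∀ ρ : Matrix n n ℂ,
      schatten 2 (∑ a, P a * ρ * P a) ≤ schatten 2 ρ ∧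
        (schatten 2 (∑ a, P a * ρ * P a) = schatten 2 ρ ↔ (∑ a, P a * ρ * P a) = ρ) := by
  intro ρ
  classical
  set Q : Matrix n n ℂ := ∑ a, P a * ρ * P a with hQ
  have hQT : Qᴴ = ∑ a, P a * ρᴴ * P a := by
    rw [hQ, Matrix.conjTranspose_sum]
    refine Finset.sum_congr rfl fun a _ => ?_
    simp [Matrix.conjTranspose_mul, hherm, mul_assoc]
  have key : ∀ a b : ι, Matrix.trace (P a * ρᴴ * P a * (P b * ρ * P b)) =
      if a = b then Matrix.trace (P a * ρᴴ * (P a * ρ)) else 0 := by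
    intro a b
    rcases eq_or_ne a b with rfl | hab
    · rw [if_pos rfl]
      have h1 : P a * ρᴴ * P a * (P a * ρ * P a)
          = (P a * ρᴴ * P a * (P a * ρ)) * P a := by
        simp only [mul_assoc]
      rw [h1, Matrix.trace_mul_comm]
      simp only [← mul_assoc]
      rw [hproj, mul_assoc (P a * ρᴴ) (P a) (P a), hproj]
    · rw [if_neg hab]
      have h1 : P a * ρᴴ * P a * (P b * ρ * P b)
          = P a * ρᴴ * (P a * P b) * (ρ * P b) := by
        simp only [mul_assoc]
      rw [h1, horth a b hab]
      simp
  have hQQ : Matrix.trace (Qᴴ * Q) = ∑ a, Matrix.trace (P a * ρᴴ * (P a * ρ)) := by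
    rw [hQT, hQ, Finset.sum_mul_sum]
    rw [Matrix.trace_sum]
    simp only [Matrix.trace_sum, key, Finset.sum_ite_eq, Finset.mem_univ, if_pos]
  have hQρ : Matrix.trace (Qᴴ * ρ) = ∑ a, Matrix.trace (P a * ρᴴ * (P a * ρ)) := by
    rw [hQT, Finset.sum_mul, Matrix.trace_sum]
    refine Finset.sum_congr rfl fun a _ => ?_
    simp only [mul_assoc]
  have hρQ : Matrix.trace (ρᴴ * Q) = ∑ a, Matrix.trace (P a * ρᴴ * (P a * ρ)) := by
    rw [hQ, Matrix.mul_sum, Matrix.trace_sum]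
    refine Finset.sum_congr rfl fun a _ => ?_
    have h1 : ρᴴ * (P a * ρ * P a) = (ρᴴ * (P a * ρ)) * P a := by
      simp only [mul_assoc]
    rw [h1, Matrix.trace_mul_comm]
    simp only [← mul_assoc]
  have hD : Matrix.trace ((ρ - Q)ᴴ * (ρ - Q))
      = Matrix.trace (ρᴴ * ρ) - Matrix.trace (Qᴴ * Q) := by
    simp only [Matrix.conjTranspose_sub, Matrix.sub_mul, Matrix.mul_sub, Matrix.trace_sub]
    rw [hQQ, hQρ, hρQ]
    ring
  have hBA : (Matrix.trace (Qᴴ * Q)).re ≤ (Matrix.trace (ρᴴ * ρ)).re := by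
    have := congrArg Complex.re hD
    simp only [Complex.sub_re] at this
    have hC := trace_re_nonneg' (ρ - Q)
    linarith
  have hBnn := trace_re_nonneg' Q
  have hAnn := trace_re_nonneg' ρ
  constructor
  · unfold schatten
    rw [traceAbsPow_two', traceAbsPow_two']
    exact Real.rpow_le_rpow hBnn hBA (by norm_num)
  · constructor
    · intro heq
      unfold schatten at heq
      rw [traceAbsPow_two', traceAbsPow_two'] at heq
      have hBA' : (Matrix.trace (Qᴴ * Q)).re = (Matrix.trace (ρᴴ * ρ)).re :=
        Real.rpow_left_injOn (by norm_num : (1/2 : ℝ) ≠ 0) hBnn hAnn heq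
      have := congrArg Complex.re hD
      simp only [Complex.sub_re] at this
      have hC0 : (Matrix.trace ((ρ - Q)ᴴ * (ρ - Q))).re = 0 := by linarith
      have := (trace_eq_zero_iff' (ρ - Q)).mp hC0
      have := sub_eq_zero.mp this
      exact this.symm
    · intro h; rw [h]
end
end
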